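/- arXiv:2310.14927 — 10 statements merged into one kernel-verified Lean document; each statement's English description precedes it below -/
import Mathlib

section
/- Let b : ℕ → ℝ and m : ℕ → ℝ define a birth-death chain (b r > 0, m r > 0 for all r), let α > 0 and let u : ℕ → ℝ be α-harmonic. If u 0 > 0, then u is strictly increasing, i.e. u r < u (r+1) for all r ∈ ℕ. -/
/-- A birth-death chain over `ℕ` with edge weights `b` (edge between `r` and `r+1`)
and measure `m`: a function `u` is `α`-harmonic if `(Δ + α) u = 0` where
`Δu(0) = (1/m 0) · b 0 · (u 0 − u 1)` and
`Δu(r) = (1/m r) · (b (r−1) · (u r − u (r−1)) + b r · (u r − u (r+1)))` for `r ≥ 1`. -/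
def IsAlphaHarmonicBD (b m : ℕ → ℝ) (α : ℝ) (u : ℕ → ℝ) : Prop :=
  (1 / m 0) * (b 0 * (u 0 - u 1)) + α * u 0 = 0 ∧
  ∀ r : ℕ, 1 ≤ r →
    (1 / m r) * (b (r - 1) * (u r - u (r - 1)) + b r * (u r - u (r + 1))) + α * u r = 0

theorem bd_harmonic_strict_mono (b m : ℕ → ℝ) (hb : ∀ r, 0 < b r) (hm : ∀ r, 0 < m r)
    (α : ℝ) (hα : 0 < α) (u : ℕ → ℝ) (hu : IsAlphaHarmonicBD b m α u)
    (h0 : 0 < u 0) : ∀ r : ℕ, u r < u (r + 1) := by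
  obtain ⟨h₀, hr⟩ := hu
  have key : ∀ r : ℕ, 0 < u r ∧ u r < u (r + 1) := by
    intro r
    induction r with
    | zero =>
      refine ⟨h0, ?_⟩
      have hm0 := (hm 0).ne'
      have : b 0 * (u 0 - u 1) = -(α * u 0 * m 0) := by
        field_simp at h₀
        linarith
      nlinarith [hb 0, hm 0, mul_pos hα h0]
    | succ n ih =>
      obtain ⟨hpos, hlt⟩ := ih
      have hpos' : 0 < u (n + 1) := hpos.trans hlt
      refine ⟨hpos', ?_⟩
      have heq := hr (n + 1) (Nat.le_add_left 1 n)
      have hsimp : (n + 1 : ℕ) - 1 = n := rfl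
      rw [hsimp] at heq
      have hmne := (hm (n + 1)).ne'
      have : b n * (u (n+1) - u n) + b (n+1) * (u (n+1) - u (n+2)) =
          -(α * u (n+1) * m (n+1)) := by
        field_simp at heq
        linarith
      nlinarith [hb n, hb (n+1), hm (n+1), mul_pos hα hpos', mul_pos (hb n) (sub_pos.mpr hlt)]
  exact fun r => (key r).2
end

section
/- Let b : ℕ → ℝ and m : ℕ → ℝ define a birth-death chain (b r > 0, m r > 0 for all r), let α > 0 and let u : ℕ → ℝ be α-harmonic with u 0 > 0. Then for every r ≥ 1 one has b r·(u (r+1) − u r) ≥ b (r−1)·(u r − u (r−1)), and for every r ∈ ℕ one has b r·(u (r+1) − u r) ≥ α·u 0·m 0. -/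
theorem bd_harmonic_increments (b m : ℕ → ℝ) (hb : ∀ r, 0 < b r) (hm : ∀ r, 0 < m r)
    (α : ℝ) (hα : 0 < α) (u : ℕ → ℝ) (hu : IsAlphaHarmonicBD b m α u)
    (h0 : 0 < u 0) :
    (∀ r : ℕ, 1 ≤ r →
      b (r - 1) * (u r - u (r - 1)) ≤ b r * (u (r + 1) - u r)) ∧
    (∀ r : ℕ, α * u 0 * m 0 ≤ b r * (u (r + 1) - u r)) := by
  obtain ⟨h0eq, hreq⟩ := hu
  -- base equation: b 0 * (u 1 - u 0) = α * m 0 * u 0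
  have hm0 : (m 0) ≠ 0 := (hm 0).ne'
  have base : b 0 * (u 1 - u 0) = α * u 0 * m 0 := by
    field_simp at h0eq
    nlinarith [h0eq]
  -- recurrence: for r ≥ 1, b r * (u (r+1) - u r) = b (r-1)*(u r - u (r-1)) + α * m r * u r
  have hrec : ∀ r : ℕ, 1 ≤ r →
      b r * (u (r + 1) - u r) = b (r - 1) * (u r - u (r - 1)) + α * m r * u r := by
    intro r hr
    have h := hreq r hr
    have hmr : (m r) ≠ 0 := (hm r).ne'
    field_simp at h
    nlinarith [h]
  -- main induction
  have main : ∀ r : ℕ, 0 < u r ∧ α * u 0 * m 0 ≤ b r * (u (r + 1) - u r) := by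
    intro r
    induction r with
    | zero => exact ⟨h0, le_of_eq base.symm⟩
    | succ k ih =>
      obtain ⟨huk, hinc⟩ := ih
      have hpos : 0 < α * u 0 * m 0 := mul_pos (mul_pos hα h0) (hm 0)
      have huk1 : 0 < u (k + 1) := by
        have : 0 < b k * (u (k + 1) - u k) := lt_of_lt_of_le hpos hinc
        nlinarith [hb k]
      have hk : (1:ℕ) ≤ k + 1 := Nat.le_add_left 1 k
      have hr := hrec (k + 1) hk
      simp only [Nat.add_sub_cancel] at hr
      refine ⟨huk1, ?_⟩
      have : 0 < α * m (k + 1) * u (k + 1) := mul_pos (mul_pos hα (hm (k+1))) huk1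
      linarith [hr, hinc]
  refine ⟨fun r hr => ?_, fun r => (main r).2⟩
  have hr2 := hrec r hr
  have hur : 0 < u r := (main r).1
  nlinarith [hm r, mul_pos (mul_pos hα (hm r)) hur]
end

section
/- Let b : ℕ → ℝ and m : ℕ → ℝ define a birth-death chain (b r > 0, m r > 0 for all r), let α > 0 and let u : ℕ → ℝ be α-harmonic with u 0 > 0. Then u r ≥ u 0 for all r, and u r ≥ α·u 0·m 0·(∑_{k=0}^{r−1} 1/(b k)) for all r ≥ 1. -/
theorem bd_harmonic_lower_bound (b m : ℕ → ℝ) (hb : ∀ r, 0 < b r) (hm : ∀ r, 0 < m r)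
    (α : ℝ) (hα : 0 < α) (u : ℕ → ℝ) (hu : IsAlphaHarmonicBD b m α u)
    (h0 : 0 < u 0) :
    (∀ r : ℕ, u 0 ≤ u r) ∧
    (∀ r : ℕ, 1 ≤ r →
      α * u 0 * m 0 * ∑ k ∈ Finset.range r, 1 / b k ≤ u r) := by
  obtain ⟨h1, h2⟩ := hu
  set f : ℕ → ℝ := fun r => b r * (u (r + 1) - u r) with hf
  have hf0 : f 0 = α * m 0 * u 0 := by
    have hm0 : m 0 ≠ 0 := (hm 0).ne'
    field_simp at h1
    simp only [hf]
    nlinarith [h1]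
  have hfs : ∀ r : ℕ, f (r + 1) = f r + α * m (r + 1) * u (r + 1) := by
    intro r
    have h := h2 (r + 1) (Nat.le_add_left 1 r)
    have hmr : m (r + 1) ≠ 0 := (hm (r + 1)).ne'
    field_simp at h
    simp only [hf, Nat.add_sub_cancel] at h ⊢
    nlinarith [h]
  -- main induction: u r ≥ u 0 and f r ≥ α m0 u0
  have key : ∀ r : ℕ, u 0 ≤ u r ∧ α * m 0 * u 0 ≤ f r := by
    intro r
    induction r with
    | zero => exact ⟨le_refl _, le_of_eq hf0.symm⟩
    | succ n ih =>
      obtain ⟨ihu, ihf⟩ := ih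
      have hpos : 0 < α * m 0 * u 0 := mul_pos (mul_pos hα (hm 0)) h0
      have hfn : 0 < f n := lt_of_lt_of_le hpos ihf
      have hstep : u n ≤ u (n + 1) := by
        have := hb n
        simp only [hf] at hfn
        nlinarith
      have hu1 : u 0 ≤ u (n + 1) := le_trans ihu hstep
      refine ⟨hu1, ?_⟩
      rw [hfs n]
      nlinarith [mul_pos (hm (n+1)) (lt_of_lt_of_le h0 hu1), hα]
  refine ⟨fun r => (key r).1, ?_⟩
  have sum_bd : ∀ r : ℕ, u 0 + α * u 0 * m 0 * ∑ k ∈ Finset.range r, 1 / b k ≤ u r := by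
    intro r
    induction r with
    | zero => simp
    | succ n ih =>
      rw [Finset.sum_range_succ]
      have hbn := hb n
      have hfn := (key n).2
      have : α * m 0 * u 0 * (1 / b n) ≤ f n * (1 / b n) := by
        apply mul_le_mul_of_nonneg_right hfn
        positivity
      have hfdiv : f n * (1 / b n) = u (n + 1) - u n := by
        field_simp [hf]
        rfl
      nlinarith [this, hfdiv, ih]
  intro r _
  have := sum_bd r
  linarith
end

section
/- Let b : ℕ → ℝ and m : ℕ → ℝ define a birth-death chain (b r > 0, m r > 0 for all r), let α > 0 and let u : ℕ → ℝ be α-harmonic with u 0 > 0. If the family (u r · m r)_{r∈ℕ} is summable, then: (1) m is summable; (2) the family r ↦ (∑_{k>r} m k)/(b r) is summable; and (3) ∑_{r=0}^∞ u r · m r ≥ α·u 0·m 0 · ∑_{r=0}^∞ (∑_{k>r} m k)/(b r). -/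
theorem bd_harmonic_ell1_tail_sums (b m : ℕ → ℝ) (hb : ∀ r, 0 < b r) (hm : ∀ r, 0 < m r)
    (α : ℝ) (hα : 0 < α) (u : ℕ → ℝ) (hu : IsAlphaHarmonicBD b m α u)
    (h0 : 0 < u 0) (hsum : Summable (fun r : ℕ => u r * m r)) :
    Summable m ∧
    Summable (fun r : ℕ => (∑' k : ℕ, m (r + 1 + k)) / b r) ∧
    α * u 0 * m 0 * ∑' r : ℕ, (∑' k : ℕ, m (r + 1 + k)) / b r ≤ ∑' r : ℕ, u r * m r := by
  obtain ⟨h0eq, hreq⟩ := hu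
  -- key telescoping identity
  have key : ∀ n, b n * (u (n + 1) - u n) = α * ∑ r ∈ Finset.range (n + 1), u r * m r := by
    intro n
    induction n with
    | zero =>
      simp only [zero_add, Finset.sum_range_one]
      have hm0 : m 0 ≠ 0 := (hm 0).ne'
      field_simp at h0eq
      nlinarith [h0eq]
    | succ n ih =>
      have h := hreq (n + 1) (by omega)
      simp only [Nat.add_sub_cancel] at h
      have hmn : m (n + 1) ≠ 0 := (hm (n + 1)).ne'
      rw [Finset.sum_range_succ]
      field_simp at h
      nlinarith [h, ih]
  -- positivity of u
  have upos : ∀ n, ∀ k ≤ n, 0 < u k := by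
    intro n
    induction n with
    | zero => intro k hk; interval_cases k; exact h0
    | succ n ih =>
      intro k hk
      rcases Nat.lt_or_ge k (n + 1) with h | h
      · exact ih k (by omega)
      · have hk' : k = n + 1 := by omega
        subst hk'
        have hS : 0 < ∑ r ∈ Finset.range (n + 1), u r * m r := by
          refine Finset.sum_pos (fun i hi => mul_pos (ih i ?_) (hm i)) ⟨0, by simp⟩
          exact Nat.lt_succ_iff.mp (Finset.mem_range.mp hi)
        nlinarith [key n, hb n, ih n le_rfl, mul_pos hα hS]
  have hupos : ∀ k, 0 < u k := fun k => upos k k le_rfl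
  have hSpos : ∀ n, 0 < ∑ r ∈ Finset.range (n + 1), u r * m r := fun n =>
    Finset.sum_pos (fun i _ => mul_pos (hupos i) (hm i)) ⟨0, by simp⟩
  set d : ℕ → ℝ := fun n => u (n + 1) - u n with hd_def
  have hdpos : ∀ n, 0 < d n := by
    intro n
    show 0 < u (n + 1) - u n
    nlinarith [key n, hb n, mul_pos hα (hSpos n)]
  have hmono : ∀ n, u 0 ≤ u n := by
    intro n
    induction n with
    | zero => exact le_rfl
    | succ n ih => have := hdpos n; simp only [hd_def] at this; linarith
  have habs : ∀ r, (0 : ℝ) ≤ u r * m r := fun r => (mul_pos (hupos r) (hm r)).le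
  -- (1) summability of m
  have hSm : Summable m := by
    refine Summable.of_nonneg_of_le (fun r => (hm r).le)
      (f := fun r => (1 / u 0) * (u r * m r)) (fun r => ?_) (hsum.mul_left _)
    have h1 : u 0 * m r ≤ u r * m r := mul_le_mul_of_nonneg_right (hmono r) (hm r).le
    show m r ≤ 1 / u 0 * (u r * m r)
    rw [div_mul_eq_mul_div, one_mul, le_div_iff₀ h0]
    nlinarith [h1]
  -- tail sums
  set T : ℕ → ℝ := fun r => ∑' k : ℕ, m (r + 1 + k) with hT_def
  have hTsummable : ∀ r, Summable fun k => m (r + 1 + k) := by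
    intro r
    have := (summable_nat_add_iff (r + 1)).mpr hSm
    apply this.congr
    intro k
    simp [add_comm]
  have hT0 : ∀ r, 0 ≤ T r := fun r => tsum_nonneg (fun k => (hm _).le)
  -- the double array G
  set G : ℕ × ℕ → ℝ := fun p => if p.2 < p.1 then d p.2 * m p.1 else 0 with hG_def
  have hGnn : ∀ p, 0 ≤ G p := by
    intro p
    simp only [hG_def]
    split
    · exact mul_nonneg (hdpos _).le (hm _).le
    · exact le_rfl
  have hrow0 : ∀ r : ℕ, ∀ j ∉ Finset.range r, G (r, j) = 0 := by
    intro r j hj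
    have h' : ¬ j < r := fun h => hj (Finset.mem_range.mpr h)
    show (if j < r then d j * m r else 0) = 0
    exact if_neg h'
  have hrow : ∀ r, ∑' j, G (r, j) = (u r - u 0) * m r := by
    intro r
    rw [tsum_eq_sum (hrow0 r)]
    calc ∑ j ∈ Finset.range r, G (r, j)
        = ∑ j ∈ Finset.range r, d j * m r := by
          refine Finset.sum_congr rfl fun j hj => ?_
          simp only [hG_def, if_pos (Finset.mem_range.mp hj)]
      _ = (∑ j ∈ Finset.range r, d j) * m r := (Finset.sum_mul _ _ _).symm
      _ = (u r - u 0) * m r := by rw [hd_def, Finset.sum_range_sub]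
  have hsub : Summable (fun r => (u r - u 0) * m r) := by
    refine Summable.of_nonneg_of_le (fun r => mul_nonneg (by linarith [hmono r]) (hm r).le)
      (fun r => ?_) hsum
    nlinarith [hm r, h0]
  have hG : Summable G := by
    refine (summable_prod_of_nonneg hGnn).mpr ⟨fun r => summable_of_ne_finset_zero (hrow0 r), ?_⟩
    simpa only [hrow] using hsub
  -- the reindexed array H
  set e : ℕ × ℕ → ℕ × ℕ := fun p => (p.1 + 1 + p.2, p.1) with he_def
  have he : Function.Injective e := by
    intro p q h
    simp only [he_def, Prod.mk.injEq] at h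
    obtain ⟨h1, h2⟩ := h
    exact Prod.ext h2 (by omega)
  have hGe : (G ∘ e) = fun p : ℕ × ℕ => d p.1 * m (p.1 + 1 + p.2) := by
    funext p
    simp only [Function.comp_apply, hG_def, he_def]
    rw [if_pos (by omega)]
  have hH : Summable fun p : ℕ × ℕ => d p.1 * m (p.1 + 1 + p.2) := by
    rw [← hGe]; exact hG.comp_injective he
  have hHnn : ∀ p : ℕ × ℕ, 0 ≤ d p.1 * m (p.1 + 1 + p.2) := fun p =>
    mul_nonneg (hdpos _).le (hm _).le
  have hdT : Summable (fun j => d j * T j) := by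
    have h2 := ((summable_prod_of_nonneg hHnn).mp hH).2
    apply h2.congr
    intro j
    show (∑' k : ℕ, d j * m (j + 1 + k)) = d j * T j
    exact tsum_mul_left
  -- support of G is contained in the range of e
  have hsupp : Function.support G ⊆ Set.range e := by
    intro p hp
    have hlt : p.2 < p.1 := by
      by_contra h
      exact hp (by simp only [hG_def, if_neg h])
    exact ⟨(p.2, p.1 - 1 - p.2), by simp only [he_def]; exact Prod.ext (by omega) rfl⟩
  have htsum_eq : ∑' j, d j * T j = ∑' r, (u r - u 0) * m r := by
    have e1 : ∑' p : ℕ × ℕ, d p.1 * m (p.1 + 1 + p.2) = ∑' j, d j * T j := by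
      rw [Summable.tsum_prod hH]
      refine tsum_congr fun j => ?_
      show (∑' k : ℕ, d j * m (j + 1 + k)) = d j * T j
      exact tsum_mul_left
    have e2 : ∑' p : ℕ × ℕ, d p.1 * m (p.1 + 1 + p.2) = ∑' p, G p := by
      rw [← he.tsum_eq hsupp]
      exact tsum_congr fun p => (congrFun hGe p).symm
    have e3 : ∑' p, G p = ∑' r, (u r - u 0) * m r := by
      rw [Summable.tsum_prod hG]
      exact tsum_congr hrow
    rw [← e1, e2, e3]
  -- lower bound on b r * d r
  have hc : 0 < α * u 0 * m 0 := mul_pos (mul_pos hα h0) (hm 0)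
  have hbd : ∀ r, α * u 0 * m 0 ≤ b r * d r := by
    intro r
    rw [key r]
    have h1 : u 0 * m 0 ≤ ∑ i ∈ Finset.range (r + 1), u i * m i :=
      Finset.single_le_sum (f := fun i => u i * m i) (fun i _ => habs i)
        (Finset.mem_range.mpr (Nat.succ_pos r))
    nlinarith
  -- (2) summability of tails over b
  have hTb : Summable (fun r : ℕ => T r / b r) := by
    refine Summable.of_nonneg_of_le (fun r => div_nonneg (hT0 r) (hb r).le)
      (f := fun r => (α * u 0 * m 0)⁻¹ * (d r * T r)) (fun r => ?_) (hdT.mul_left _)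
    have h2 : (α * u 0 * m 0)⁻¹ * ((α * u 0 * m 0) * T r)
        ≤ (α * u 0 * m 0)⁻¹ * ((b r * d r) * T r) :=
      mul_le_mul_of_nonneg_left (mul_le_mul_of_nonneg_right (hbd r) (hT0 r))
        (inv_nonneg.mpr hc.le)
    rw [inv_mul_cancel_left₀ hc.ne'] at h2
    rw [div_le_iff₀ (hb r)]
    calc T r ≤ (α * u 0 * m 0)⁻¹ * (b r * d r * T r) := h2
      _ = (α * u 0 * m 0)⁻¹ * (d r * T r) * b r := by ring
  refine ⟨hSm, hTb, ?_⟩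
  -- (3) the inequality
  have hpt : ∀ r, α * u 0 * m 0 * (T r / b r) ≤ d r * T r := by
    intro r
    have h1 : α * u 0 * m 0 * (T r / b r) ≤ (b r * d r) * (T r / b r) :=
      mul_le_mul_of_nonneg_right (hbd r) (div_nonneg (hT0 r) (hb r).le)
    have h2 : b r * (T r / b r) = T r := by
      rw [← mul_div_assoc]
      exact mul_div_cancel_left₀ (T r) (hb r).ne'
    calc α * u 0 * m 0 * (T r / b r) ≤ b r * d r * (T r / b r) := h1
      _ = d r * (b r * (T r / b r)) := by ring
      _ = d r * T r := by rw [h2]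
  calc α * u 0 * m 0 * ∑' r, T r / b r
      = ∑' r, α * u 0 * m 0 * (T r / b r) := (tsum_mul_left).symm
    _ ≤ ∑' r, d r * T r := Summable.tsum_le_tsum hpt (hTb.mul_left _) hdT
    _ = ∑' r, (u r - u 0) * m r := htsum_eq
    _ ≤ ∑' r, u r * m r := by
        refine Summable.tsum_le_tsum (fun r => ?_) hsub hsum
        nlinarith [hm r, h0]
end

section
/- Let b : ℕ → ℝ and m : ℕ → ℝ define a birth-death chain (b r > 0, m r > 0 for all r), let α > 0 and let u : ℕ → ℝ be α-harmonic, not identically zero, and such that the family (|u r|·m r)_{r∈ℕ} is summable (i.e. u ∈ ℓ¹(ℕ,m)). Then m is summable and the family r ↦ (∑_{k>r} m k)/(b r) is summable. -/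
lemma bd_rec0 (b m : ℕ → ℝ) (hm : ∀ r, 0 < m r) (α : ℝ) (u : ℕ → ℝ)
    (hu : IsAlphaHarmonicBD b m α u) : b 0 * (u 1 - u 0) = α * (m 0 * u 0) := by
  have h := hu.1
  have hm0 : m 0 ≠ 0 := (hm 0).ne'
  field_simp at h
  linarith

lemma bd_recS (b m : ℕ → ℝ) (hm : ∀ r, 0 < m r) (α : ℝ) (u : ℕ → ℝ)
    (hu : IsAlphaHarmonicBD b m α u) (r : ℕ) :
    b (r+1) * (u (r+2) - u (r+1)) = b r * (u (r+1) - u r) + α * (m (r+1) * u (r+1)) := by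
  have h := hu.2 (r+1) (by omega)
  simp only [Nat.add_sub_cancel] at h
  have hm0 : m (r+1) ≠ 0 := (hm (r+1)).ne'
  field_simp at h
  linarith

lemma bd_w (b m : ℕ → ℝ) (hm : ∀ r, 0 < m r) (α : ℝ) (u : ℕ → ℝ)
    (hu : IsAlphaHarmonicBD b m α u) (r : ℕ) :
    b r * (u (r+1) - u r) = α * ∑ k ∈ Finset.range (r+1), m k * u k := by
  induction r with
  | zero => simpa [Finset.sum_range_one] using bd_rec0 b m hm α u hu
  | succ n ih =>
      rw [Finset.sum_range_succ, mul_add, ← ih]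
      have := bd_recS b m hm α u hu n
      linarith

lemma bd_zero (b m : ℕ → ℝ) (hb : ∀ r, 0 < b r) (hm : ∀ r, 0 < m r) (α : ℝ) (u : ℕ → ℝ)
    (hu : IsAlphaHarmonicBD b m α u) (h0 : u 0 = 0) : u = 0 := by
  have key : ∀ r, ∀ k ≤ r, u k = 0 := by
    intro r
    induction r with
    | zero => intro k hk; interval_cases k; exact h0
    | succ n ih =>
        intro k hk
        rcases Nat.lt_or_ge k (n+1) with h | h
        · exact ih k (by omega)
        · have hk1 : k = n + 1 := by omega
          subst hk1
          have hw := bd_w b m hm α u hu n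
          have hz : ∑ k ∈ Finset.range (n+1), m k * u k = 0 := by
            apply Finset.sum_eq_zero
            intro i hi
            rw [ih i (by simpa using Nat.lt_succ_iff.mp (Finset.mem_range.mp hi)), mul_zero]
          rw [hz, mul_zero, ih n le_rfl, sub_zero] at hw
          exact (mul_eq_zero.mp hw).resolve_left (hb n).ne'
  funext r
  exact key r r le_rfl

lemma bd_pos (b m : ℕ → ℝ) (hb : ∀ r, 0 < b r) (hm : ∀ r, 0 < m r) (α : ℝ) (hα : 0 < α)
    (u : ℕ → ℝ) (hu : IsAlphaHarmonicBD b m α u) (h0 : 0 < u 0) :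
    (∀ r, 0 < u r) ∧ StrictMono u := by
  have key : ∀ r, (∀ k ≤ r, 0 < u k) ∧ u r < u (r+1) := by
    intro r
    induction r with
    | zero =>
        have hw := bd_w b m hm α u hu 0
        rw [Finset.sum_range_one] at hw
        refine ⟨fun k hk => by interval_cases k; exact h0, ?_⟩
        have hpos : 0 < α * (m 0 * u 0) := mul_pos hα (mul_pos (hm 0) h0)
        nlinarith [hb 0]
    | succ n ih =>
        have hall : ∀ k ≤ n + 1, 0 < u k := by
          intro k hk
          rcases Nat.lt_or_ge k (n+1) with h | h
          · exact ih.1 k (by omega)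
          · have : k = n + 1 := by omega
            subst this
            exact lt_trans (ih.1 n le_rfl) ih.2
        refine ⟨hall, ?_⟩
        have hw := bd_w b m hm α u hu (n+1)
        have hspos : 0 < ∑ k ∈ Finset.range (n+2), m k * u k := by
          apply Finset.sum_pos
          · intro i hi
            have hi' := Finset.mem_range.mp hi
            exact mul_pos (hm i) (hall i (by omega))
          · exact ⟨0, Finset.mem_range.mpr (by omega)⟩
        have hpos : 0 < α * ∑ k ∈ Finset.range (n+2), m k * u k := mul_pos hα hspos
        nlinarith [hb (n+1)]
  exact ⟨fun r => (key r).1 r le_rfl, strictMono_nat_of_lt_succ fun n => (key n).2⟩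

lemma bd_aux (b m : ℕ → ℝ) (hb : ∀ r, 0 < b r) (hm : ∀ r, 0 < m r)
    (α : ℝ) (hα : 0 < α) (u : ℕ → ℝ) (hu : IsAlphaHarmonicBD b m α u)
    (h0 : 0 < u 0) (hsum : Summable (fun r : ℕ => |u r| * m r)) :
    Summable m ∧ Summable (fun r : ℕ => (∑' k : ℕ, m (r + 1 + k)) / b r) := by
  obtain ⟨hpos, hmono⟩ := bd_pos b m hb hm α hα u hu h0
  set f : ℕ → ℝ := fun k => m k * u k with hf
  have hfs : Summable f := by
    refine hsum.congr fun k => ?_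
    simp [hf, abs_of_pos (hpos k), mul_comm]
  have hfnn : ∀ k, 0 ≤ f k := fun k => le_of_lt (mul_pos (hm k) (hpos k))
  -- m summable
  have hSm : Summable m := by
    refine Summable.of_nonneg_of_le (fun r => (hm r).le) (fun r => ?_) (hfs.mul_left (1 / u 0))
    have h1 : u 0 ≤ u r := hmono.monotone (Nat.zero_le r)
    have : m r = (1 / u 0) * (m r * u 0) := by field_simp
    rw [this]
    exact mul_le_mul_of_nonneg_left (mul_le_mul_of_nonneg_left h1 (hm r).le)
      (by positivity)
  set S : ℝ := ∑' k, f k with hS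
  set T : ℕ → ℝ := fun r => ∑' k : ℕ, m (r + 1 + k) with hT
  have hTsum : ∀ r, Summable fun k => m (r + 1 + k) := fun r =>
    ((summable_nat_add_iff (r+1)).2 hSm).congr fun k => by rw [add_comm]
  have hT0 : ∀ r, 0 ≤ T r := fun r => tsum_nonneg fun k => (hm _).le
  have hTrec : ∀ r, T r = m (r+1) + T (r+1) := by
    intro r
    have h1 := Summable.tsum_eq_zero_add (hTsum r)
    have h2 : ∑' (k : ℕ), m (r + 1 + (k + 1)) = ∑' (k : ℕ), m (r + 1 + 1 + k) :=
      tsum_congr fun k => congrArg m (by omega)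
    simp only [hT]
    rw [h1, h2]
  have hfshift : ∀ N : ℕ, Summable fun k => f (N + 1 + k) := fun N =>
    ((summable_nat_add_iff (N+1)).2 hfs).congr fun k => by rw [add_comm]
  have htail : ∀ N : ℕ, ∑' k, f (N + 1 + k) ≤ S := by
    intro N
    have h1 := Summable.sum_add_tsum_nat_add (N+1) hfs
    have h2 : ∑' k, f (N + 1 + k) = ∑' k, f (k + (N+1)) :=
      tsum_congr fun k => congrArg f (by omega)
    have h3 : 0 ≤ ∑ i ∈ Finset.range (N+1), f i :=
      Finset.sum_nonneg fun i _ => hfnn i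
    rw [h2]
    rw [hS]
    linarith
  have hkey : ∀ N : ℕ, u N * T N ≤ S := by
    intro N
    have h1 : u N * T N = ∑' k, u N * m (N + 1 + k) := (tsum_mul_left).symm
    have h2 : ∑' k, u N * m (N + 1 + k) ≤ ∑' k, f (N + 1 + k) := by
      refine Summable.tsum_le_tsum (fun k => ?_) ((hTsum N).mul_left (u N)) (hfshift N)
      have hle : u N ≤ u (N + 1 + k) := hmono.monotone (by omega)
      calc u N * m (N + 1 + k) = m (N + 1 + k) * u N := by ring
        _ ≤ m (N + 1 + k) * u (N + 1 + k) :=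
            mul_le_mul_of_nonneg_left hle (hm _).le
    rw [h1]
    exact h2.trans (htail N)
  set F : ℕ → ℝ := fun r => (u (r+1) - u r) * T r with hF
  have hFnn : ∀ r, 0 ≤ F r := fun r =>
    mul_nonneg (sub_nonneg.2 (hmono (Nat.lt_succ_self r)).le) (hT0 r)
  have hFs : Summable F := by
    apply summable_of_sum_range_le hFnn (c := S + S)
    intro N
    have hFeq : ∀ r, F r = (u (r+1) * T (r+1) - u r * T r) + f (r+1) := by
      intro r
      have := hTrec r
      simp only [hF, hf]
      rw [this]
      ring
    calc ∑ r ∈ Finset.range N, F r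
        = ∑ r ∈ Finset.range N, ((u (r+1) * T (r+1) - u r * T r) + f (r+1)) :=
          Finset.sum_congr rfl fun r _ => hFeq r
      _ = (u N * T N - u 0 * T 0) + ∑ r ∈ Finset.range N, f (r+1) := by
          rw [Finset.sum_add_distrib, Finset.sum_range_sub (fun r => u r * T r)]
      _ ≤ S + S := by
          have h1 := hkey N
          have h2 : 0 ≤ u 0 * T 0 := mul_nonneg (hpos 0).le (hT0 0)
          have h3 : ∑ r ∈ Finset.range N, f (r+1) ≤ S := by
            have h4 : ∑ i ∈ Finset.range (N+1), f i =
                (∑ i ∈ Finset.range N, f (i+1)) + f 0 := Finset.sum_range_succ' f N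
            have h5 : ∑ i ∈ Finset.range (N+1), f i ≤ S :=
              Summable.sum_le_tsum _ (fun i _ => hfnn i) hfs
            have := hfnn 0
            linarith
          linarith
  refine ⟨hSm, ?_⟩
  set D : ℝ := α * (m 0 * u 0) with hD
  have hDpos : 0 < D := mul_pos hα (mul_pos (hm 0) h0)
  refine Summable.of_nonneg_of_le (fun r => div_nonneg (hT0 r) (hb r).le)
    (fun r => ?_) (hFs.div_const D)
  have hd : 0 < u (r+1) - u r := sub_pos.2 (hmono (Nat.lt_succ_self r))
  have hw : D ≤ b r * (u (r+1) - u r) := by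
    rw [bd_w b m hm α u hu r, hD]
    have : m 0 * u 0 ≤ ∑ k ∈ Finset.range (r+1), m k * u k :=
      Finset.single_le_sum (f := fun k => m k * u k)
        (fun i _ => le_of_lt (mul_pos (hm i) (hpos i)))
        (Finset.mem_range.mpr (by omega))
    exact mul_le_mul_of_nonneg_left this hα.le
  have heq : T r / b r = F r / (b r * (u (r+1) - u r)) := by
    rw [hF]
    rw [mul_comm (b r)]
    rw [mul_div_mul_left _ _ hd.ne']
  rw [heq]
  gcongr
  exact hFnn r

lemma bd_neg (b m : ℕ → ℝ) (α : ℝ) (u : ℕ → ℝ) (hu : IsAlphaHarmonicBD b m α u) :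
    IsAlphaHarmonicBD b m α (fun r => -u r) := by
  constructor
  · have h := hu.1
    simp only
    linear_combination -h
  · intro r hr
    have h := hu.2 r hr
    simp only
    linear_combination -h

theorem bd_harmonic_ell1_nontrivial (b m : ℕ → ℝ) (hb : ∀ r, 0 < b r) (hm : ∀ r, 0 < m r)
    (α : ℝ) (hα : 0 < α) (u : ℕ → ℝ) (hu : IsAlphaHarmonicBD b m α u)
    (hne : u ≠ 0) (hsum : Summable (fun r : ℕ => |u r| * m r)) :
    Summable m ∧ Summable (fun r : ℕ => (∑' k : ℕ, m (r + 1 + k)) / b r) := by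
  have h0 : u 0 ≠ 0 := fun h => hne (bd_zero b m hb hm α u hu h)
  rcases h0.lt_or_gt with hneg | hpos
  · have hu' := bd_neg b m α u hu
    have hsum' : Summable (fun r : ℕ => |(fun r => -u r) r| * m r) :=
      hsum.congr fun r => by simp
    exact bd_aux b m hb hm α hα (fun r => -u r) hu' (by simpa using hneg) hsum'
  · exact bd_aux b m hb hm α hα u hu hpos hsum
end

section
/- Let b : ℕ → ℝ and m : ℕ → ℝ define a birth-death chain (b r > 0, m r > 0 for all r). Then the following are equivalent: (i) for every α > 0, every α-harmonic function u : ℕ → ℝ with (|u r|·m r)_{r∈ℕ} summable is identically zero; (ii) either m is not summable, or both the family r ↦ 1/(b r) and the family r ↦ (∑_{k>r} m k)/(b r) fail to be summable. -/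
namespace BDaux

/-- flow relation from harmonicity -/
lemma flow_of_harmonic {b m : ℕ → ℝ} (hm : ∀ r, m r ≠ 0) {α : ℝ} {u : ℕ → ℝ}
    (h : IsAlphaHarmonicBD b m α u) :
    ∀ r, b r * (u (r+1) - u r) = α * ∑ k ∈ Finset.range (r+1), m k * u k := by
  intro r
  induction r with
  | zero =>
      have h0 := h.1
      have hm0 := hm 0
      rw [Finset.sum_range_one]
      field_simp at h0
      nlinarith [h0]
  | succ n ih =>
      have h1 := h.2 (n+1) (by omega)
      have hm1 := hm (n+1)
      simp only [Nat.add_sub_cancel] at h1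
      rw [Finset.sum_range_succ]
      field_simp at h1
      nlinarith [h1, ih]

/-- harmonicity from flow relation -/
lemma harmonic_of_flow {b m : ℕ → ℝ} (hm : ∀ r, m r ≠ 0) {α : ℝ} {u : ℕ → ℝ}
    (h : ∀ r, b r * (u (r+1) - u r) = α * ∑ k ∈ Finset.range (r+1), m k * u k) :
    IsAlphaHarmonicBD b m α u := by
  constructor
  · have h0 := h 0
    rw [Finset.sum_range_one] at h0
    have hm0 := hm 0
    field_simp
    nlinarith [h0]
  · intro r hr
    obtain ⟨n, rfl⟩ : ∃ n, r = n + 1 := ⟨r - 1, by omega⟩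
    simp only [Nat.add_sub_cancel]
    have h1 := h (n+1)
    have h2 := h n
    rw [Finset.sum_range_succ] at h1
    rw [mul_add] at h1
    have hm1 := hm (n+1)
    field_simp
    nlinarith [h1]

end BDaux

namespace BDaux

noncomputable def S (m : ℕ → ℝ) (r : ℕ) : ℝ := ∑' k, m (r + 1 + k)

lemma S_nonneg {m : ℕ → ℝ} (hm : ∀ r, 0 < m r) (r : ℕ) : 0 ≤ S m r :=
  tsum_nonneg (fun k => (hm _).le)

lemma summable_shift {m : ℕ → ℝ} (hSm : Summable m) (j : ℕ) :
    Summable (fun k => m (j + k)) := by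
  have := (summable_nat_add_iff j).2 hSm
  exact this.congr (fun k => by rw [add_comm])

lemma S_rec {m : ℕ → ℝ} (hSm : Summable m) (r : ℕ) :
    S m r = m (r + 1) + S m (r + 1) := by
  unfold S
  rw [Summable.tsum_eq_zero_add (summable_shift hSm (r+1))]
  congr 1
  apply tsum_congr; intro k; congr 1; omega

lemma S_le {m : ℕ → ℝ} (hm : ∀ r, 0 < m r) (hSm : Summable m) (r : ℕ) :
    S m r ≤ ∑' k, m k := by
  have h := Summable.sum_add_tsum_nat_add (r+1) hSm
  have h2 : S m r = ∑' k, m (k + (r+1)) := by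
    apply tsum_congr; intro k; congr 1; omega
  have h3 : 0 ≤ ∑ i ∈ Finset.range (r+1), m i :=
    Finset.sum_nonneg fun i _ => (hm i).le
  linarith [h, h2.ge, h2.le]

/-- Abel summation identity. -/
lemma abel {m : ℕ → ℝ} (hSm : Summable m) (v : ℕ → ℝ) (N : ℕ) :
    ∑ r ∈ Finset.range N, (v (r+1) - v r) * S m r
      = v N * S m N - v 0 * S m 0 + ∑ r ∈ Finset.range N, v (r+1) * m (r+1) := by
  have key : ∀ r, (v (r+1) - v r) * S m r
      = (v (r+1) * S m (r+1) - v r * S m r) + v (r+1) * m (r+1) := by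
    intro r
    rw [S_rec hSm r]
    ring
  calc ∑ r ∈ Finset.range N, (v (r+1) - v r) * S m r
      = ∑ r ∈ Finset.range N, ((v (r+1) * S m (r+1) - v r * S m r) + v (r+1) * m (r+1)) :=
        Finset.sum_congr rfl (fun r _ => key r)
    _ = (∑ r ∈ Finset.range N, (v (r+1) * S m (r+1) - v r * S m r))
          + ∑ r ∈ Finset.range N, v (r+1) * m (r+1) := Finset.sum_add_distrib
    _ = v N * S m N - v 0 * S m 0 + ∑ r ∈ Finset.range N, v (r+1) * m (r+1) := by
        rw [Finset.sum_range_sub (fun r => v r * S m r)]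



noncomputable def P (b m : ℕ → ℝ) (α : ℝ) : ℕ → ℝ × ℝ
  | 0 => (1, m 0)
  | r + 1 =>
    let p := P b m α r
    let u' := p.1 + α * p.2 / b r
    (u', p.2 + m (r+1) * u')

variable {b m : ℕ → ℝ} {α : ℝ}

noncomputable def U (b m : ℕ → ℝ) (α : ℝ) (r : ℕ) : ℝ := (P b m α r).1
noncomputable def T (b m : ℕ → ℝ) (α : ℝ) (r : ℕ) : ℝ := (P b m α r).2

lemma U_zero : U b m α 0 = 1 := rfl
lemma T_zero : T b m α 0 = m 0 := rfl
lemma U_succ (r : ℕ) : U b m α (r+1) = U b m α r + α * T b m α r / b r := rfl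
lemma T_succ (r : ℕ) : T b m α (r+1) = T b m α r + m (r+1) * U b m α (r+1) := rfl

lemma T_eq (r : ℕ) : T b m α r = ∑ k ∈ Finset.range (r+1), m k * U b m α k := by
  induction r with
  | zero => simp [T_zero, U_zero]
  | succ n ih => rw [Finset.sum_range_succ, ← ih, T_succ]

lemma U_pos (hb : ∀ r, 0 < b r) (hm : ∀ r, 0 < m r) (hα : 0 < α) :
    ∀ r, 1 ≤ U b m α r ∧ 0 < T b m α r := by
  intro r
  induction r with
  | zero => exact ⟨le_refl _, hm 0⟩
  | succ n ih =>
      have h1 : 1 ≤ U b m α (n+1) := by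
        rw [U_succ]
        have hbn := hb n
        have hTn := ih.2
        have : 0 < α * T b m α n / b n := by positivity
        linarith [ih.1]
      refine ⟨h1, ?_⟩
      rw [T_succ]
      nlinarith [ih.2, hm (n+1)]

lemma U_mono (hb : ∀ r, 0 < b r) (hm : ∀ r, 0 < m r) (hα : 0 < α) :
    Monotone (U b m α) := by
  apply monotone_nat_of_le_succ
  intro n
  rw [U_succ]
  have hbn := hb n
  have hTn := (U_pos hb hm hα n).2
  have : 0 ≤ α * T b m α n / b n := by positivity
  linarith

lemma T_mono (hb : ∀ r, 0 < b r) (hm : ∀ r, 0 < m r) (hα : 0 < α) :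
    Monotone (T b m α) := by
  apply monotone_nat_of_le_succ
  intro n
  rw [T_succ]
  nlinarith [(U_pos hb hm hα (n+1)).1, hm (n+1)]

lemma flow_U (hb : ∀ r, 0 < b r) (r : ℕ) :
    b r * (U b m α (r+1) - U b m α r) = α * ∑ k ∈ Finset.range (r+1), m k * U b m α k := by
  rw [U_succ, ← T_eq]
  have hbr := (hb r).ne'
  field_simp
  ring


end BDaux

namespace BDaux

lemma dirA {b m : ℕ → ℝ} (hb : ∀ r, 0 < b r) (hm : ∀ r, 0 < m r)
    (hSm : Summable m) (hC : Summable (fun r => S m r / b r)) :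
    ∃ α : ℝ, 0 < α ∧ ∃ u : ℕ → ℝ, IsAlphaHarmonicBD b m α u ∧
      Summable (fun r : ℕ => |u r| * m r) ∧ u ≠ 0 := by
  set C : ℝ := ∑' r, S m r / b r with hCdef
  have hC0 : 0 ≤ C := tsum_nonneg (fun r => div_nonneg (S_nonneg hm r) (hb r).le)
  set α : ℝ := 1 / (2 * (C + 1)) with hαdef
  have hα : 0 < α := by positivity
  have hαC : α * C ≤ 1 / 2 := by
    rw [hαdef]
    rw [div_mul_eq_mul_div, div_le_div_iff₀ (by positivity) (by norm_num)]
    nlinarith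
  set M : ℝ := ∑' k, m k with hMdef
  have hMS : m 0 + S m 0 = M := by
    have h1 := Summable.tsum_eq_zero_add hSm
    have h2 : S m 0 = ∑' k, m (k + 1) := by
      apply tsum_congr; intro k; congr 1; omega
    rw [h2]; linarith [h1]
  -- key bound on T
  have hTb : ∀ N, T b m α N ≤ 2 * M := by
    intro N
    have habel := abel hSm (U b m α) N
    have hTN : T b m α N = m 0 * U b m α 0 + ∑ r ∈ Finset.range N, m (r+1) * U b m α (r+1) := by
      rw [T_eq, Finset.sum_range_succ']
      ring
    have hU0 : U b m α 0 = 1 := U_zero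
    have hTpos : ∀ r, 0 < T b m α r := fun r => (U_pos hb hm hα r).2
    have hUpos : ∀ r, (1:ℝ) ≤ U b m α r := fun r => (U_pos hb hm hα r).1
    -- each (U(r+1)-U r) * S r ≤ α * T N * (S r / b r)
    have hpt : ∀ r ∈ Finset.range N, (U b m α (r+1) - U b m α r) * S m r
        ≤ α * T b m α N * (S m r / b r) := by
      intro r hr
      have hrN : r ≤ N := by
        simp only [Finset.mem_range] at hr; omega
      have hd : U b m α (r+1) - U b m α r = α * T b m α r / b r := by
        rw [U_succ]; ring
      have hTle : T b m α r ≤ T b m α N := T_mono hb hm hα hrN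
      have hbr := hb r
      have hSr := S_nonneg hm r
      rw [hd, show α * T b m α r / b r * S m r = α * T b m α r * (S m r / b r) from by ring]
      exact mul_le_mul_of_nonneg_right (mul_le_mul_of_nonneg_left hTle hα.le) (div_nonneg hSr hbr.le)
    have hsum1 : ∑ r ∈ Finset.range N, (U b m α (r+1) - U b m α r) * S m r
        ≤ α * T b m α N * C := by
      calc ∑ r ∈ Finset.range N, (U b m α (r+1) - U b m α r) * S m r
          ≤ ∑ r ∈ Finset.range N, α * T b m α N * (S m r / b r) := Finset.sum_le_sum hpt
        _ = α * T b m α N * ∑ r ∈ Finset.range N, (S m r / b r) := by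
            rw [Finset.mul_sum]
        _ ≤ α * T b m α N * C := by
            apply mul_le_mul_of_nonneg_left _ (mul_nonneg hα.le (hTpos N).le)
            exact Summable.sum_le_tsum _ (fun i _ => div_nonneg (S_nonneg hm i) (hb i).le) hC
    have hUNSN : 0 ≤ U b m α N * S m N := by
      have := hUpos N; have := S_nonneg hm N; nlinarith
    -- combine
    have hT1 : T b m α N ≤ m 0 + S m 0 + α * T b m α N * C := by
      rw [hU0] at habel hTN
      have hswap : ∑ r ∈ Finset.range N, m (r+1) * U b m α (r+1)
          = ∑ r ∈ Finset.range N, U b m α (r+1) * m (r+1) :=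
        Finset.sum_congr rfl (fun r _ => mul_comm _ _)
      linarith [habel, hsum1, hUNSN, hTN, hswap]
    have hTpos' := hTpos N
    nlinarith [hT1, hMS, hαC]
  refine ⟨α, hα, U b m α, ?_, ?_, ?_⟩
  · exact harmonic_of_flow (fun r => (hm r).ne') (flow_U hb)
  · have hcong : ∀ r, |U b m α r| * m r = m r * U b m α r := by
      intro r
      rw [abs_of_pos (by linarith [(U_pos hb hm hα r).1])]; ring
    apply summable_of_sum_range_le (c := 2 * M)
    · intro n
      exact mul_nonneg (abs_nonneg _) (hm n).le
    · intro n
      calc ∑ r ∈ Finset.range n, |U b m α r| * m r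
          = ∑ r ∈ Finset.range n, m r * U b m α r :=
            Finset.sum_congr rfl (fun k _ => hcong k)
        _ ≤ ∑ k ∈ Finset.range (n+1), m k * U b m α k := by
            apply Finset.sum_le_sum_of_subset_of_nonneg (Finset.range_subset_range.2 (by omega))
            intro i _ _
            have h1 := (U_pos hb hm hα i).1; have h2 := hm i; nlinarith
        _ = T b m α n := (T_eq n).symm
        _ ≤ 2 * M := hTb n
  · intro h0
    have : U b m α 0 = 0 := by rw [h0]; rfl
    rw [U_zero] at this
    norm_num at this

end BDaux

namespace BDaux

lemma dirB {b m : ℕ → ℝ} (hb : ∀ r, 0 < b r) (hm : ∀ r, 0 < m r)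
    {α : ℝ} (hα : 0 < α) {u : ℕ → ℝ}
    (hu : IsAlphaHarmonicBD b m α u) (hsum : Summable (fun r => |u r| * m r))
    (hne : u ≠ 0) :
    Summable m ∧ Summable (fun r => S m r / b r) := by
  have K := flow_of_harmonic (fun r => (hm r).ne') hu
  have hu0 : u 0 ≠ 0 := by
    intro h0
    apply hne
    have h : ∀ r, ∀ k ≤ r, u k = 0 := by
      intro r
      induction r with
      | zero =>
          intro k hk
          have : k = 0 := by omega
          rw [this, h0]
      | succ n ih =>
          intro k hk
          rcases Nat.lt_or_ge k (n+1) with h | h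
          · exact ih k (by omega)
          · have hk1 : k = n + 1 := by omega
            subst hk1
            have hK := K n
            have hz : ∑ j ∈ Finset.range (n+1), m j * u j = 0 :=
              Finset.sum_eq_zero (fun j hj => by
                rw [ih j (by simpa [Nat.lt_succ_iff] using Finset.mem_range.1 hj)]; ring)
            rw [hz, mul_zero] at hK
            have hun : u n = 0 := ih n le_rfl
            rw [hun, sub_zero] at hK
            have := (hb n).ne'
            exact (mul_eq_zero.1 hK).resolve_left this
    funext r
    simpa using h r r le_rfl
  set s : ℝ := if 0 < u 0 then 1 else -1 with hs
  have hs1 : s = 1 ∨ s = -1 := by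
    rw [hs]; split <;> simp
  set v : ℕ → ℝ := fun r => s * u r with hv
  have hv0 : 0 < v 0 := by
    rcases lt_trichotomy (u 0) 0 with h | h | h
    · have hsneg : s = -1 := by rw [hs, if_neg (by linarith)]
      show 0 < s * u 0
      rw [hsneg]; linarith
    · exact absurd h hu0
    · have hspos : s = 1 := by rw [hs, if_pos h]
      show 0 < s * u 0
      rw [hspos]; linarith
  have Kv : ∀ r, b r * (v (r+1) - v r) = α * ∑ k ∈ Finset.range (r+1), m k * v k := by
    intro r
    have hK := K r
    have hsum' : ∑ k ∈ Finset.range (r+1), m k * v k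
        = s * ∑ k ∈ Finset.range (r+1), m k * u k := by
      rw [Finset.mul_sum]
      exact Finset.sum_congr rfl (fun k _ => by show m k * (s * u k) = s * (m k * u k); ring)
    rw [hsum']
    show b r * (s * u (r+1) - s * u r) = α * (s * ∑ k ∈ Finset.range (r+1), m k * u k)
    linear_combination s * hK
  have hvpos : ∀ r, ∀ k ≤ r, 0 < v k := by
    intro r
    induction r with
    | zero =>
        intro k hk
        have : k = 0 := by omega
        rw [this]; exact hv0
    | succ n ih =>
        intro k hk
        rcases Nat.lt_or_ge k (n+1) with h | h
        · exact ih k (by omega)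
        · have hk1 : k = n + 1 := by omega
          subst hk1
          have hS : 0 < ∑ j ∈ Finset.range (n+1), m j * v j :=
            Finset.sum_pos (fun j hj => mul_pos (hm j)
              (ih j (by simpa [Nat.lt_succ_iff] using Finset.mem_range.1 hj)))
              ⟨0, Finset.mem_range.2 (by omega)⟩
          nlinarith [Kv n, mul_pos hα hS, hb n, ih n le_rfl]
  have hvp : ∀ r, 0 < v r := fun r => hvpos r r le_rfl
  have hmono : Monotone v := by
    apply monotone_nat_of_le_succ
    intro n
    have hS : 0 ≤ ∑ j ∈ Finset.range (n+1), m j * v j :=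
      Finset.sum_nonneg (fun j _ => (mul_pos (hm j) (hvp j)).le)
    nlinarith [Kv n, hb n, mul_nonneg hα.le hS]
  have hsabs : |s| = 1 := by rcases hs1 with h | h <;> simp [h]
  have habs : ∀ r, |u r| = v r := by
    intro r
    have h1 : |v r| = v r := abs_of_pos (hvp r)
    calc |u r| = |s| * |u r| := by rw [hsabs, one_mul]
      _ = |s * u r| := (abs_mul s (u r)).symm
      _ = v r := h1
  have hfv : Summable (fun r => m r * v r) :=
    hsum.congr (fun r => by rw [habs r, mul_comm])
  set L : ℝ := ∑' r, m r * v r with hL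
  have hL0 : 0 ≤ L := tsum_nonneg (fun r => (mul_pos (hm r) (hvp r)).le)
  have hSm : Summable m := by
    apply Summable.of_nonneg_of_le (fun r => (hm r).le) (fun r => ?_) (hfv.mul_right (v 0)⁻¹)
    have h1 : v 0 ≤ v r := hmono (Nat.zero_le r)
    calc m r = m r * v 0 * (v 0)⁻¹ := by field_simp
      _ ≤ m r * v r * (v 0)⁻¹ :=
        mul_le_mul_of_nonneg_right (mul_le_mul_of_nonneg_left h1 (hm r).le)
          (inv_nonneg.2 hv0.le)
  refine ⟨hSm, ?_⟩
  have hvNSN : ∀ N, v N * S m N ≤ L := by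
    intro N
    have hshift : Summable (fun k => m (N+1+k) * v (N+1+k)) := by
      have h := (summable_nat_add_iff (N+1)).2 hfv
      exact h.congr (fun k => by rw [show k + (N+1) = N+1+k by omega])
    have h1 : v N * S m N = ∑' k, v N * m (N+1+k) := tsum_mul_left.symm
    rw [h1]
    have h2 : ∑' k, v N * m (N+1+k) ≤ ∑' k, m (N+1+k) * v (N+1+k) := by
      apply Summable.tsum_le_tsum _ ((summable_shift hSm (N+1)).mul_left _) hshift
      intro k
      have hm1 := hm (N+1+k)
      have hv1 : v N ≤ v (N+1+k) := hmono (by omega)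
      nlinarith
    have h3 : ∑' k, m (N+1+k) * v (N+1+k) ≤ L := by
      have h4 := Summable.sum_add_tsum_nat_add (f := fun r => m r * v r) (N+1) hfv
      have h5 : ∑' k, m (N+1+k) * v (N+1+k) = ∑' k, m (k+(N+1)) * v (k+(N+1)) :=
        tsum_congr (fun k => by rw [show N+1+k = k+(N+1) by omega])
      have h6 : 0 ≤ ∑ i ∈ Finset.range (N+1), m i * v i :=
        Finset.sum_nonneg (fun i _ => (mul_pos (hm i) (hvp i)).le)
      rw [h5]
      linarith [h4]
    linarith
  have hc0 : 0 < α * (m 0 * v 0) := mul_pos hα (mul_pos (hm 0) hv0)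
  apply summable_of_sum_range_le (c := 2 * L / (α * (m 0 * v 0)))
    (fun r => div_nonneg (S_nonneg hm r) (hb r).le)
  intro N
  have hpw : ∀ r, S m r / b r ≤ (v (r+1) - v r) * S m r / (α * (m 0 * v 0)) := by
    intro r
    have hTv : m 0 * v 0 ≤ ∑ k ∈ Finset.range (r+1), m k * v k := by
      apply Finset.single_le_sum (f := fun k => m k * v k)
        (fun k _ => (mul_pos (hm k) (hvp k)).le) (Finset.mem_range.2 (by omega))
    have hK := Kv r
    rw [div_le_div_iff₀ (hb r) hc0]
    have hS := S_nonneg hm r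
    have hK2 : b r * (v (r+1) - v r) * S m r
        = α * (∑ k ∈ Finset.range (r+1), m k * v k) * S m r := by rw [hK]
    nlinarith [mul_le_mul_of_nonneg_right (mul_le_mul_of_nonneg_left hTv hα.le) hS, hK2]
  calc ∑ r ∈ Finset.range N, S m r / b r
      ≤ ∑ r ∈ Finset.range N, (v (r+1) - v r) * S m r / (α * (m 0 * v 0)) :=
        Finset.sum_le_sum (fun r _ => hpw r)
    _ = (∑ r ∈ Finset.range N, (v (r+1) - v r) * S m r) / (α * (m 0 * v 0)) := by
        rw [Finset.sum_div]
    _ ≤ 2 * L / (α * (m 0 * v 0)) := by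
        gcongr
        have habel := abel hSm v N
        have h2 : ∑ k ∈ Finset.range (N+1), m k * v k ≤ L :=
          Summable.sum_le_tsum _ (fun i _ => (mul_pos (hm i) (hvp i)).le) hfv
        have h3 : ∑ k ∈ Finset.range (N+1), m k * v k
            = ∑ r ∈ Finset.range N, m (r+1) * v (r+1) + m 0 * v 0 :=
          Finset.sum_range_succ' _ N
        have h4 : ∑ r ∈ Finset.range N, v (r+1) * m (r+1)
            = ∑ r ∈ Finset.range N, m (r+1) * v (r+1) :=
          Finset.sum_congr rfl (fun r _ => mul_comm _ _)
        have h5 := hvNSN N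
        have h6 : 0 ≤ v 0 * S m 0 := mul_nonneg hv0.le (S_nonneg hm 0)
        nlinarith [mul_pos (hm 0) hv0, habel]

end BDaux


theorem bd_triviality_ell1_harmonic_iff (b m : ℕ → ℝ)
    (hb : ∀ r, 0 < b r) (hm : ∀ r, 0 < m r) :
    (∀ α : ℝ, 0 < α → ∀ u : ℕ → ℝ, IsAlphaHarmonicBD b m α u →
      Summable (fun r : ℕ => |u r| * m r) → u = 0) ↔
    (¬ Summable m ∨
      (¬ Summable (fun r : ℕ => 1 / b r) ∧
       ¬ Summable (fun r : ℕ => (∑' k : ℕ, m (r + 1 + k)) / b r))) := by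
  constructor
  · intro huniq
    by_contra hcon
    push_neg at hcon
    obtain ⟨hSm, h2⟩ := hcon
    have htb : Summable (fun r : ℕ => BDaux.S m r / b r) := by
      by_cases h1 : Summable (fun r : ℕ => 1 / b r)
      · apply Summable.of_nonneg_of_le
          (fun r => div_nonneg (BDaux.S_nonneg hm r) (hb r).le) (fun r => ?_)
          (h1.mul_left (∑' k, m k))
        have hle := BDaux.S_le hm hSm r
        rw [div_eq_mul_one_div]
        exact mul_le_mul_of_nonneg_right hle (one_div_nonneg.2 (hb r).le)
      · exact h2 h1
    obtain ⟨α, hα, u, hharm, hsum2, hne⟩ := BDaux.dirA hb hm hSm htb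
    exact hne (huniq α hα u hharm hsum2)
  · intro hii α hα u hharm hsum2
    by_contra hne
    obtain ⟨hSm, htb⟩ := BDaux.dirB hb hm hα hharm hsum2 hne
    rcases hii with h | ⟨h1, h2⟩
    · exact h hSm
    · exact h2 htb
end

section
/- Let b : ℕ → ℝ and m : ℕ → ℝ define a birth-death chain (b r > 0, m r > 0 for all r), let α > 0 and let u : ℕ → ℝ be α-harmonic, not identically zero, and such that the family ((u r)²·m r)_{r∈ℕ} is summable (i.e. u ∈ ℓ²(ℕ,m)). Then m is summable and the family r ↦ (∑_{k>r} m k)/(b r) is summable. -/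
/-- Main work lemma, assuming `u 0 > 0`. -/
theorem bd_main (b m : ℕ → ℝ) (hb : ∀ r, 0 < b r) (hm : ∀ r, 0 < m r)
    (α : ℝ) (hα : 0 < α) (u : ℕ → ℝ) (hu : IsAlphaHarmonicBD b m α u)
    (h0 : 0 < u 0) (hsum : Summable (fun r : ℕ => (u r) ^ 2 * m r)) :
    Summable m ∧ Summable (fun r : ℕ => (∑' k : ℕ, m (r + 1 + k)) / b r) := by
  set F : ℕ → ℝ := fun r => b r * (u (r + 1) - u r) with hF
  have hF0 : F 0 = α * (m 0 * u 0) := by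
    have h := hu.1
    have hm0 : m 0 ≠ 0 := (hm 0).ne'
    field_simp [hF] at h ⊢
    nlinarith [h]
  have hFs : ∀ r : ℕ, F (r + 1) = F r + α * (m (r + 1) * u (r + 1)) := by
    intro r
    have h := hu.2 (r + 1) (by omega)
    have hr : (r + 1) - 1 = r := by omega
    rw [hr] at h
    have hmr : m (r + 1) ≠ 0 := (hm (r + 1)).ne'
    field_simp [hF] at h ⊢
    nlinarith [h]
  have hF0pos : 0 < F 0 := by
    rw [hF0]; exact mul_pos hα (mul_pos (hm 0) h0)
  have key : ∀ r, 0 < u r ∧ F 0 ≤ F r := by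
    intro r
    induction r with
    | zero => exact ⟨h0, le_refl _⟩
    | succ n ih =>
      have hun : 0 < u n := ih.1
      have hFn : 0 < F n := lt_of_lt_of_le hF0pos ih.2
      have hstep : u n < u (n + 1) := by
        have : 0 < b n * (u (n + 1) - u n) := hFn
        nlinarith [hb n]
      have hun1 : 0 < u (n + 1) := lt_trans hun hstep
      refine ⟨hun1, ?_⟩
      rw [hFs n]
      have : 0 < α * (m (n + 1) * u (n + 1)) := mul_pos hα (mul_pos (hm (n + 1)) hun1)
      linarith [ih.2]
  have hpos : ∀ r, 0 < u r := fun r => (key r).1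
  have hlt : ∀ r, u r < u (r + 1) := by
    intro r
    have hFr : 0 < F r := lt_of_lt_of_le hF0pos (key r).2
    have : 0 < b r * (u (r + 1) - u r) := hFr
    nlinarith [hb r]
  have hmono : StrictMono u := strictMono_nat_of_lt_succ hlt
  -- Part 1 : Summable m
  have hmsum : Summable m := by
    refine Summable.of_nonneg_of_le (fun r => (hm r).le)
      (f := fun r => (1 / (u 0) ^ 2) * ((u r) ^ 2 * m r)) (fun r => ?_) (hsum.mul_left _)
    have h1 : u 0 ≤ u r := hmono.monotone (Nat.zero_le r)
    have h2 : (u 0) ^ 2 * m r ≤ (u r) ^ 2 * m r := by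
      have : (u 0) ^ 2 ≤ (u r) ^ 2 := by nlinarith [hpos r]
      exact mul_le_mul_of_nonneg_right this (hm r).le
    calc m r = (1 / (u 0) ^ 2) * ((u 0) ^ 2 * m r) := by
            field_simp
      _ ≤ (1 / (u 0) ^ 2) * ((u r) ^ 2 * m r) := by
            apply mul_le_mul_of_nonneg_left h2
            positivity
  -- Set up constants
  set C := ∑' r, (u r) ^ 2 * m r with hC
  have hCnn : 0 ≤ C := tsum_nonneg (fun r => mul_nonneg (sq_nonneg _) (hm r).le)
  set c := α * (m 0 * u 0) with hc
  have hcpos : 0 < c := mul_pos hα (mul_pos (hm 0) h0)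
  -- Tail bounds
  have htail : ∀ r : ℕ, Summable (fun k : ℕ => m (r + 1 + k)) := by
    intro r
    apply ((summable_nat_add_iff (r + 1)).2 hmsum).congr
    intro k; rw [Nat.add_comm]
  have hMbound : ∀ r : ℕ, (u (r + 1)) ^ 2 * (∑' k : ℕ, m (r + 1 + k)) ≤ C := by
    intro r
    rw [← tsum_mul_left]
    have hshift : Summable (fun k : ℕ => (u (r + 1 + k)) ^ 2 * m (r + 1 + k)) := by
      apply ((summable_nat_add_iff (r + 1)).2 hsum).congr
      intro k; rw [Nat.add_comm]
    calc ∑' k : ℕ, (u (r + 1)) ^ 2 * m (r + 1 + k)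
        ≤ ∑' k : ℕ, (u (r + 1 + k)) ^ 2 * m (r + 1 + k) := by
          refine Summable.tsum_le_tsum (fun k => ?_) ((htail r).mul_left _) hshift
          have h1 : u (r + 1) ≤ u (r + 1 + k) := hmono.monotone (by omega)
          have h2 : 0 < u (r + 1) := hpos _
          have : (u (r + 1)) ^ 2 ≤ (u (r + 1 + k)) ^ 2 := by nlinarith
          exact mul_le_mul_of_nonneg_right this (hm _).le
      _ ≤ C := by
          exact Summable.tsum_le_tsum_of_inj (fun k => r + 1 + k)
            (fun a b hab => by simpa using hab)
            (fun n _ => mul_nonneg (sq_nonneg _) (hm n).le)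
            (fun k => le_refl _)
            hshift hsum
  -- telescoping comparison series
  have htele : Summable (fun r : ℕ => 1 / u r - 1 / u (r + 1)) := by
    apply summable_of_sum_range_le (c := 1 / u 0)
    · intro n
      have : 1 / u (n + 1) ≤ 1 / u n := one_div_le_one_div_of_le (hpos n) (hlt n).le
      linarith
    · intro n
      rw [Finset.sum_range_sub' (fun i => 1 / u i) n]
      have : 0 ≤ 1 / u n := one_div_nonneg.mpr (hpos n).le
      linarith
  refine ⟨hmsum, ?_⟩
  refine Summable.of_nonneg_of_le (fun r => ?_) (fun r => ?_) (htele.mul_left (C / c))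
  · have hM : 0 ≤ ∑' k : ℕ, m (r + 1 + k) := tsum_nonneg (fun k => (hm _).le)
    have := hb r
    positivity
  · set M := ∑' k : ℕ, m (r + 1 + k) with hM
    have hMnn : 0 ≤ M := tsum_nonneg (fun k => (hm _).le)
    have hx := hpos r
    have hy := hpos (r + 1)
    have hxy := hlt r
    have h1 : M ≤ C / (u (r + 1)) ^ 2 := by
      rw [le_div_iff₀ (pow_pos hy 2)]
      calc M * (u (r + 1)) ^ 2 = (u (r + 1)) ^ 2 * M := by ring
        _ ≤ C := hMbound r
    have hFr : c ≤ F r := hF0 ▸ (key r).2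
    have h2 : 1 / b r ≤ (u (r + 1) - u r) / c := by
      rw [div_le_div_iff₀ (hb r) hcpos]
      have h3 : c ≤ b r * (u (r + 1) - u r) := hFr
      nlinarith
    calc M / b r = M * (1 / b r) := by ring
      _ ≤ (C / (u (r + 1)) ^ 2) * ((u (r + 1) - u r) / c) := by
          exact mul_le_mul h1 h2 (one_div_nonneg.mpr (hb r).le)
            (div_nonneg hCnn (sq_nonneg _))
      _ ≤ (C / c) * (1 / u r - 1 / u (r + 1)) := by
          have hrw : 1 / u r - 1 / u (r + 1) = (u (r + 1) - u r) / (u r * u (r + 1)) := by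
            field_simp
          rw [hrw, div_mul_div_comm, div_mul_div_comm,
            div_le_div_iff₀ (by positivity) (by positivity)]
          nlinarith [mul_nonneg (mul_nonneg (mul_nonneg hCnn hcpos.le) hy.le)
            (sq_nonneg (u (r + 1) - u r))]

theorem bd_harmonic_ell2_nontrivial (b m : ℕ → ℝ) (hb : ∀ r, 0 < b r) (hm : ∀ r, 0 < m r)
    (α : ℝ) (hα : 0 < α) (u : ℕ → ℝ) (hu : IsAlphaHarmonicBD b m α u)
    (hne : u ≠ 0) (hsum : Summable (fun r : ℕ => (u r) ^ 2 * m r)) :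
    Summable m ∧ Summable (fun r : ℕ => (∑' k : ℕ, m (r + 1 + k)) / b r) := by
  rcases lt_trichotomy (u 0) 0 with h0 | h0 | h0
  · -- apply to -u
    have hu' : IsAlphaHarmonicBD b m α (fun r => -u r) := by
      constructor
      · show (1 / m 0) * (b 0 * (-u 0 - -u 1)) + α * (-u 0) = 0
        linear_combination (-1 : ℝ) * hu.1
      · intro r hr
        show (1 / m r) * (b (r - 1) * (-u r - -u (r - 1)) + b r * (-u r - -u (r + 1)))
            + α * (-u r) = 0
        linear_combination (-1 : ℝ) * hu.2 r hr
    have hsum' : Summable (fun r : ℕ => (-u r) ^ 2 * m r) := by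
      have he : (fun r : ℕ => (-u r) ^ 2 * m r) = fun r : ℕ => (u r) ^ 2 * m r := by
        funext r; ring
      rw [he]; exact hsum
    have h0' : (0 : ℝ) < -u 0 := neg_pos.mpr h0
    exact bd_main b m hb hm α hα (fun r => -u r) hu' h0' hsum'
  · -- u 0 = 0 forces u = 0, contradiction
    exfalso
    apply hne
    have hall : ∀ r, u r = 0 ∧ u (r + 1) = 0 := by
      intro r
      induction r with
      | zero =>
        refine ⟨h0, ?_⟩
        have h := hu.1
        rw [h0] at h
        have hm0 : m 0 ≠ 0 := (hm 0).ne'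
        field_simp at h
        have h2 : b 0 * u 1 = 0 := by linarith [h]
        rcases mul_eq_zero.mp h2 with h' | h'
        · exact absurd h' (hb 0).ne'
        · exact h'
      | succ n ih =>
        refine ⟨ih.2, ?_⟩
        have h := hu.2 (n + 1) (by omega)
        have hr : (n + 1) - 1 = n := by omega
        rw [hr, ih.1, ih.2] at h
        have hm1 : m (n + 1) ≠ 0 := (hm (n + 1)).ne'
        field_simp at h
        have h2 : b (n + 1) * u (n + 2) = 0 := by linarith [h]
        rcases mul_eq_zero.mp h2 with h' | h'
        · exact absurd h' (hb (n + 1)).ne'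
        · exact h'
    funext r
    exact (hall r).1
  · exact bd_main b m hb hm α hα u hu h0 hsum
end

section
/- Let n be a finite type and A : Matrix n n ℝ a matrix whose off-diagonal entries are nonpositive (A i j ≤ 0 for i ≠ j). Then for every t ≥ 0 all entries of the matrix exponential exp(−t·A) are nonnegative. -/
open scoped Matrix

open NormedSpace in
theorem aux_pow_entry_nonneg {n : Type*} [Fintype n] [DecidableEq n]
    (M : Matrix n n ℝ) (hM : ∀ i j, 0 ≤ M i j) :
    ∀ k : ℕ, ∀ i j, 0 ≤ (M ^ k) i j := by
  intro k
  induction k with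
  | zero => intro i j; simp [Matrix.one_apply]; positivity
  | succ k ih =>
    intro i j
    rw [pow_succ, Matrix.mul_apply]
    exact Finset.sum_nonneg fun l _ => mul_nonneg (ih i l) (hM l j)

open NormedSpace in
theorem aux_exp_entry_nonneg {n : Type*} [Fintype n] [DecidableEq n]
    (M : Matrix n n ℝ) (hM : ∀ i j, 0 ≤ M i j) :
    ∀ i j, 0 ≤ exp M i j := by
  letI : SeminormedRing (Matrix n n ℝ) := Matrix.linftyOpSemiNormedRing
  letI : NormedRing (Matrix n n ℝ) := Matrix.linftyOpNormedRing
  letI : NormedAlgebra ℝ (Matrix n n ℝ) := Matrix.linftyOpNormedAlgebra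
  intro i j
  have hsum : Summable fun k : ℕ => ((k.factorial : ℝ)⁻¹) • M ^ k :=
    expSeries_summable' (𝕂 := ℝ) M
  rw [exp_eq_tsum ℝ]
  beta_reduce
  have h1 : (∑' k : ℕ, ((k.factorial : ℝ)⁻¹) • M ^ k) i j
      = ∑' k : ℕ, (((k.factorial : ℝ)⁻¹) • M ^ k) i j := by
    have := tsum_apply (f := fun k : ℕ => ((k.factorial : ℝ)⁻¹) • M ^ k) (x := i) hsum
    refine (congrFun this j).trans ?_
    exact tsum_apply (hsum.map (Pi.evalAddMonoidHom _ i) (continuous_apply i))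
  rw [h1]
  refine tsum_nonneg fun k => ?_
  rw [Matrix.smul_apply, smul_eq_mul]
  exact mul_nonneg (by positivity) (aux_pow_entry_nonneg M hM k i j)

/-- If the off-diagonal entries of `A` are nonpositive, then all entries of
`exp (−t • A)` are nonnegative for `t ≥ 0`: the heat semigroup of a finite
weighted graph Laplacian is positivity preserving. -/
theorem matrix_exp_nonneg_of_offdiag_nonpos {n : Type*} [Fintype n] [DecidableEq n]
    (A : Matrix n n ℝ) (hA : ∀ i j, i ≠ j → A i j ≤ 0) :
    ∀ t : ℝ, 0 ≤ t → ∀ i j, 0 ≤ NormedSpace.exp (-t • A) i j := by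
  intro t ht i j
  set c : ℝ := ∑ k : n, t * |A k k| with hc
  have hc_ge : ∀ k : n, t * A k k ≤ c := by
    intro k
    calc t * A k k ≤ t * |A k k| := mul_le_mul_of_nonneg_left (le_abs_self _) ht
    _ ≤ c := Finset.single_le_sum (f := fun l => t * |A l l|) (fun l _ => by positivity) (Finset.mem_univ k)
  set B : Matrix n n ℝ := (-t) • A + c • (1 : Matrix n n ℝ) with hB
  have hBnn : ∀ i j, 0 ≤ B i j := by
    intro i j
    by_cases h : i = j
    · subst h
      simp only [hB, Matrix.add_apply, Matrix.smul_apply, Matrix.one_apply_eq, smul_eq_mul,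
        mul_one, neg_mul]
      linarith [hc_ge i]
    · simp only [hB, Matrix.add_apply, Matrix.smul_apply, Matrix.one_apply_ne h, smul_eq_mul,
        mul_zero, add_zero, neg_mul]
      have := hA i j h
      nlinarith
  have hsplit : (-t) • A = B + (-c) • (1 : Matrix n n ℝ) := by
    rw [hB]; abel_nf; rw [← add_smul]; simp
  have hcomm : Commute B ((-c) • (1 : Matrix n n ℝ)) :=
    (Commute.one_right B).smul_right (-c)
  rw [hsplit, Matrix.exp_add_of_commute B _ hcomm]
  have hdiag : (-c) • (1 : Matrix n n ℝ) = Matrix.diagonal (fun _ => -c) := by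
    rw [Matrix.smul_one_eq_diagonal]
  rw [hdiag, Matrix.exp_diagonal]
  rw [Matrix.mul_diagonal]
  have : NormedSpace.exp (-c) = Real.exp (-c) := by
    rw [Real.exp_eq_exp_ℝ]
  rw [Pi.coe_exp, this]
  exact mul_nonneg (aux_exp_entry_nonneg B hBnn i j) (Real.exp_nonneg _)
end

section
/- Let n be a finite type, A : Matrix n n ℝ a matrix whose off-diagonal entries are nonpositive (A i j ≤ 0 for i ≠ j), and D : Matrix n n ℝ a diagonal matrix with nonnegative diagonal entries. Then for every t ≥ 0 and every vector φ : n → ℝ with φ ≥ 0 entrywise, one has exp(−t·(A + D)) *ᵥ φ ≤ exp(−t·A) *ᵥ φ entrywise. -/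
open scoped Matrix

/-- Entrywise monotonicity of powers of entrywise-nonnegative matrices. -/
lemma pow_entry_mono_aux {n : Type*} [Fintype n] [DecidableEq n]
    (B' B : Matrix n n ℝ) (h0 : ∀ i j, 0 ≤ B' i j) (h : ∀ i j, B' i j ≤ B i j) :
    ∀ (k : ℕ) (i j : n), 0 ≤ (B' ^ k) i j ∧ (B' ^ k) i j ≤ (B ^ k) i j := by
  intro k
  induction k with
  | zero =>
    intro i j
    simp only [pow_zero, Matrix.one_apply]
    split <;> norm_num
  | succ k ih =>
    intro i j
    rw [pow_succ, pow_succ, Matrix.mul_apply, Matrix.mul_apply]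
    constructor
    · exact Finset.sum_nonneg fun l _ => mul_nonneg (ih i l).1 (h0 l j)
    · refine Finset.sum_le_sum fun l _ => ?_
      exact mul_le_mul (ih i l).2 (h l j) (h0 l j) (le_trans (ih i l).1 (ih i l).2)

/-- Domination of semigroups: adding a nonnegative diagonal potential `D` to a
generator `A` with nonpositive off-diagonal entries decreases the semigroup
applied to nonnegative vectors (Dirichlet vs. Neumann restriction). -/
theorem matrix_exp_domination {n : Type*} [Fintype n] [DecidableEq n]
    (A D : Matrix n n ℝ) (hA : ∀ i j, i ≠ j → A i j ≤ 0)
    (hDoff : ∀ i j, i ≠ j → D i j = 0) (hDdiag : ∀ i, 0 ≤ D i i) :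
    ∀ t : ℝ, 0 ≤ t → ∀ φ : n → ℝ, (∀ i, 0 ≤ φ i) → ∀ x,
      (NormedSpace.exp (-t • (A + D)) *ᵥ φ) x ≤ (NormedSpace.exp (-t • A) *ᵥ φ) x := by
  intro t ht φ hφ x
  classical
  haveI : Nonempty n := ⟨x⟩
  letI : SeminormedRing (Matrix n n ℝ) := Matrix.linftyOpSemiNormedRing
  letI : NormedRing (Matrix n n ℝ) := Matrix.linftyOpNormedRing
  letI : NormedAlgebra ℝ (Matrix n n ℝ) := Matrix.linftyOpNormedAlgebra
  -- choose a scalar shift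
  set c : ℝ := Finset.univ.sup' Finset.univ_nonempty (fun i => A i i + D i i) with hc
  have hcB : ∀ i, A i i + D i i ≤ c := fun i =>
    Finset.le_sup' (f := fun i => A i i + D i i) (Finset.mem_univ i)
  set B : Matrix n n ℝ := c • (1 : Matrix n n ℝ) - A with hB
  set B' : Matrix n n ℝ := c • (1 : Matrix n n ℝ) - (A + D) with hB'
  have hB'0 : ∀ i j, 0 ≤ B' i j := by
    intro i j
    by_cases hij : i = j
    · subst hij
      simp only [hB', Matrix.sub_apply, Matrix.add_apply, Matrix.smul_apply,
        Matrix.one_apply_eq, smul_eq_mul, mul_one]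
      linarith [hcB i]
    · simp only [hB', Matrix.sub_apply, Matrix.add_apply, Matrix.smul_apply,
        Matrix.one_apply_ne hij, smul_eq_mul, mul_zero, hDoff i j hij]
      linarith [hA i j hij]
  have hB'B : ∀ i j, B' i j ≤ B i j := by
    intro i j
    have hD : 0 ≤ D i j := by
      by_cases hij : i = j
      · subst hij; exact hDdiag i
      · rw [hDoff i j hij]
    simp only [hB', hB, Matrix.sub_apply, Matrix.add_apply]
    linarith
  -- entrywise comparison of the exponentials of t • B' and t • B
  have hpow := pow_entry_mono_aux B' B hB'0 hB'B
  -- entry evaluation as an additive monoid hom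
  have hentry : ∀ (M : Matrix n n ℝ) (i j : n),
      HasSum (fun k : ℕ => (((Nat.factorial k : ℝ))⁻¹ • M ^ k) i j) ((NormedSpace.exp M) i j) := by
    intro M i j
    have hs : HasSum (fun k : ℕ => ((Nat.factorial k : ℝ))⁻¹ • M ^ k) (NormedSpace.exp M) := by
      rw [NormedSpace.exp_eq_tsum ℝ]
      exact (NormedSpace.expSeries_summable' (𝕂 := ℝ) M).hasSum
    have hcont : Continuous fun M : Matrix n n ℝ => M i j :=
      (continuous_apply j).comp (continuous_apply i)
    exact hs.map (AddMonoidHom.mk' (fun M : Matrix n n ℝ => M i j) fun _ _ => rfl) hcont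
  have hexp_le : ∀ i j, (NormedSpace.exp (t • B')) i j ≤ (NormedSpace.exp (t • B)) i j := by
    intro i j
    refine hasSum_le (fun k => ?_) (hentry (t • B') i j) (hentry (t • B) i j)
    have h1 : (((Nat.factorial k : ℝ))⁻¹ • (t • B') ^ k) i j = ((Nat.factorial k : ℝ))⁻¹ * (t ^ k * (B' ^ k) i j) := by
      rw [smul_pow, Matrix.smul_apply, Matrix.smul_apply, smul_eq_mul, smul_eq_mul]
    have h2 : (((Nat.factorial k : ℝ))⁻¹ • (t • B) ^ k) i j = ((Nat.factorial k : ℝ))⁻¹ * (t ^ k * (B ^ k) i j) := by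
      rw [smul_pow, Matrix.smul_apply, Matrix.smul_apply, smul_eq_mul, smul_eq_mul]
    rw [h1, h2]
    have hk : (0 : ℝ) ≤ ((Nat.factorial k : ℝ))⁻¹ := by positivity
    have htk : (0 : ℝ) ≤ t ^ k := pow_nonneg ht k
    exact mul_le_mul_of_nonneg_left (mul_le_mul_of_nonneg_left (hpow k i j).2 htk) hk
  -- rewrite both exponentials using the shift
  have key : ∀ M : Matrix n n ℝ, NormedSpace.exp ((-(t * c)) • (1 : Matrix n n ℝ) + t • M)
      = Real.exp (-(t * c)) • NormedSpace.exp (t • M) := by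
    intro M
    have hcomm : Commute ((-(t * c)) • (1 : Matrix n n ℝ)) (t • M) :=
      (Commute.one_left (t • M)).smul_left _
    rw [Matrix.exp_add_of_commute _ _ hcomm]
    have h1 : ((-(t * c)) • (1 : Matrix n n ℝ)) = algebraMap ℝ (Matrix n n ℝ) (-(t * c)) := by
      rw [Algebra.algebraMap_eq_smul_one]
    rw [h1, Matrix.algebraMap_eq_diagonal, Matrix.exp_diagonal, ← NormedSpace.algebraMap_exp_comm,
      ← Matrix.algebraMap_eq_diagonal, ← Real.exp_eq_exp_ℝ,
      Algebra.algebraMap_eq_smul_one, smul_mul_assoc, one_mul]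
  have hA' : -t • A = (-(t * c)) • (1 : Matrix n n ℝ) + t • B := by
    rw [hB, smul_sub, smul_smul]
    module
  have hAD' : -t • (A + D) = (-(t * c)) • (1 : Matrix n n ℝ) + t • B' := by
    rw [hB', smul_sub, smul_smul]
    module
  rw [hA', hAD', key B, key B']
  -- conclude entrywise
  simp only [Matrix.smul_mulVec, Pi.smul_apply, smul_eq_mul]
  refine mul_le_mul_of_nonneg_left ?_ (Real.exp_nonneg _)
  simp only [Matrix.mulVec, dotProduct]
  exact Finset.sum_le_sum fun j _ => mul_le_mul_of_nonneg_right (hexp_le x j) (hφ j)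
end

section
/- Let n be a finite type and A : Matrix n n ℝ a matrix whose off-diagonal entries are nonpositive (A i j ≤ 0 for i ≠ j). Then for every t ≥ 0 and every index x ∈ n, the diagonal entry satisfies (exp(−t·A)) x x ≥ Real.exp(−t·(A x x)). -/
open scoped Matrix
open NormedSpace

private lemma entry_tsum_nonneg {n : Type*} [Fintype n] [DecidableEq n]
    {f : ℕ → Matrix n n ℝ} (hf : Summable f)
    (h : ∀ k i j, 0 ≤ f k i j) (i j : n) : 0 ≤ (∑' k, f k) i j := by
  have h2 : HasSum (fun k => f k i j) ((∑' k, f k) i j) :=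
    hf.hasSum.map (AddMonoidHom.mk' (fun M : Matrix n n ℝ => M i j) (fun _ _ => rfl))
      (continuous_id.matrix_elem i j)
  exact hasSum_le (fun k => h k i j) hasSum_zero h2

private lemma exp_entry_nonneg {n : Type*} [Fintype n] [DecidableEq n]
    (M : Matrix n n ℝ) (hM : ∀ i j, 0 ≤ M i j) (i j : n) :
    0 ≤ exp M i j := by
  have hpow : ∀ k i j, 0 ≤ (M ^ k) i j := by
    intro k
    induction k with
    | zero => intro i j; by_cases h : i = j <;> simp [pow_zero, Matrix.one_apply, h]
    | succ k ih =>
      intro i j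
      rw [pow_succ, Matrix.mul_apply]
      exact Finset.sum_nonneg fun l _ => mul_nonneg (ih i l) (hM l j)
  have hsum : Summable fun k : ℕ => ((k.factorial :ℝ)⁻¹) • M ^ k := by
    letI : SeminormedRing (Matrix n n ℝ) := Matrix.linftyOpSemiNormedRing
    letI : NormedRing (Matrix n n ℝ) := Matrix.linftyOpNormedRing
    letI : NormedAlgebra ℝ (Matrix n n ℝ) := Matrix.linftyOpNormedAlgebra
    exact expSeries_summable' (𝕂 := ℝ) M
  rw [exp_eq_tsum ℝ]
  exact entry_tsum_nonneg hsum
    (fun k i j => by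
      rw [Matrix.smul_apply]
      exact mul_nonneg (by positivity) (hpow k i j)) i j

private lemma exp_neg_smul_entry_nonneg {n : Type*} [Fintype n] [DecidableEq n]
    (A : Matrix n n ℝ) (hA : ∀ i j, i ≠ j → A i j ≤ 0)
    {t : ℝ} (ht : 0 ≤ t) (i j : n) : 0 ≤ exp (-t • A) i j := by
  set c : ℝ := ∑ i, |A i i| with hc
  have hcle : ∀ i, A i i ≤ c := fun i =>
    (le_abs_self _).trans (Finset.single_le_sum (f := fun i => |A i i|)
      (fun _ _ => abs_nonneg _) (Finset.mem_univ i))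
  have hsplit : -t • A = t • (c • (1 : Matrix n n ℝ) - A) + (-(t * c)) • (1 : Matrix n n ℝ) := by
    rw [smul_sub, smul_smul]; module
  have hcomm : Commute (t • (c • (1 : Matrix n n ℝ) - A)) ((-(t * c)) • (1 : Matrix n n ℝ)) := by
    simpa using (Commute.one_right (t • (c • (1 : Matrix n n ℝ) - A))).smul_right (-(t * c))
  rw [hsplit, Matrix.exp_add_of_commute _ _ hcomm,
    show (-(t * c)) • (1 : Matrix n n ℝ) = Matrix.diagonal (fun _ => -(t * c)) from
      Matrix.smul_one_eq_diagonal _,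
    Matrix.exp_diagonal, Matrix.mul_diagonal]
  refine mul_nonneg ?_ ?_
  · refine exp_entry_nonneg _ (fun i j => ?_) i j
    rcases eq_or_ne i j with rfl | h
    · simp only [Matrix.smul_apply, Matrix.sub_apply, Matrix.smul_apply, Matrix.one_apply_eq,
        smul_eq_mul, mul_one]
      exact mul_nonneg ht (by linarith [hcle i])
    · simp only [Matrix.smul_apply, Matrix.sub_apply, Matrix.smul_apply, Matrix.one_apply_ne h,
        smul_eq_mul, mul_zero, zero_sub]
      exact mul_nonneg ht (by linarith [hA i j h])
  · rw [Pi.coe_exp, ← Real.exp_eq_exp_ℝ]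
    exact (Real.exp_pos _).le

/-- Minimum-principle estimate for the heat semigroup of a finite graph:
`(exp (−t • A)) x x ≥ exp (−t · A x x)` when the off-diagonal entries of `A`
are nonpositive. -/
theorem matrix_exp_diag_lower_bound {n : Type*} [Fintype n] [DecidableEq n]
    (A : Matrix n n ℝ) (hA : ∀ i j, i ≠ j → A i j ≤ 0) :
    ∀ t : ℝ, 0 ≤ t → ∀ x : n, Real.exp (-t * A x x) ≤ NormedSpace.exp (-t • A) x x := by
  letI : SeminormedRing (Matrix n n ℝ) := Matrix.linftyOpSemiNormedRing
  letI : NormedRing (Matrix n n ℝ) := Matrix.linftyOpNormedRing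
  letI : NormedAlgebra ℝ (Matrix n n ℝ) := Matrix.linftyOpNormedAlgebra
  intro t ht x
  set a : ℝ := A x x with ha
  -- entry evaluation, as a continuous linear map
  let Ec : Matrix n n ℝ →L[ℝ] ℝ :=
    { toFun := fun M => M x x, map_add' := fun _ _ => rfl, map_smul' := fun _ _ => rfl,
      cont := continuous_id.matrix_elem x x }
  have hmat : ∀ s : ℝ, HasDerivAt (fun u : ℝ => exp (-u • A)) (-(exp (-s • A) * A)) s := by
    intro s
    have h1 : HasDerivAt (fun u : ℝ => exp (u • A)) (exp (-s • A) * A) (-s) :=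
      hasDerivAt_exp_smul_const (𝕂 := ℝ) A (-s)
    have h2 : HasDerivAt (fun u : ℝ => -u) (-1 : ℝ) s := (hasDerivAt_id s).neg
    have := h1.scomp s h2
    simp only [Function.comp_def, neg_smul, one_smul] at this ⊢
    exact this
  set F : ℝ → ℝ := fun s => Real.exp (s * a) * exp (-s • A) x x with hF
  have hderiv : ∀ s : ℝ, HasDerivAt F
      (Real.exp (s * a) * (-(∑ j ∈ Finset.univ.erase x, exp (-s • A) x j * A j x))) s := by
    intro s
    have hg : HasDerivAt (fun u : ℝ => exp (-u • A) x x) ((-(exp (-s • A) * A)) x x) s :=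
      Ec.hasFDerivAt.comp_hasDerivAt s (hmat s)
    have he : HasDerivAt (fun u : ℝ => Real.exp (u * a)) (Real.exp (s * a) * a) s := by
      have := (Real.hasDerivAt_exp (s * a)).comp s ((hasDerivAt_id s).mul_const a)
      simp at this
      exact this
    have := he.mul hg
    refine this.congr_deriv ?_
    rw [Matrix.neg_apply, Matrix.mul_apply,
      ← Finset.sum_erase_add _ _ (Finset.mem_univ x), ← ha]
    ring
  have hcont : Continuous F := Differentiable.continuous (fun s => (hderiv s).differentiableAt)
  have hmono : MonotoneOn F (Set.Ici (0 : ℝ)) := by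
    refine monotoneOn_of_deriv_nonneg (convex_Ici 0) hcont.continuousOn
      (fun s _ => (hderiv s).differentiableAt.differentiableWithinAt) (fun s hs => ?_)
    rw [interior_Ici] at hs
    rw [(hderiv s).deriv]
    refine mul_nonneg (Real.exp_pos _).le (neg_nonneg.2 (Finset.sum_nonpos fun j hj => ?_))
    have hj' : j ≠ x := Finset.ne_of_mem_erase hj
    exact mul_nonpos_of_nonneg_of_nonpos
      (exp_neg_smul_entry_nonneg A hA (le_of_lt hs) x j) (hA j x hj')
  have h01 : F 0 ≤ F t := hmono Set.self_mem_Ici ht ht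
  have hF0 : F 0 = 1 := by
    simp [hF, Matrix.one_apply_eq]
  rw [hF0] at h01
  -- now 1 ≤ e^{ta} * exp(-t•A) x x
  have h2 : Real.exp (-(t * a)) * 1 ≤
      Real.exp (-(t * a)) * (Real.exp (t * a) * exp (-t • A) x x) :=
    mul_le_mul_of_nonneg_left h01 (Real.exp_pos _).le
  rw [mul_one, ← mul_assoc, ← Real.exp_add, neg_add_cancel, Real.exp_zero, one_mul] at h2
  simpa [neg_mul] using h2
end
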